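/- Let s ≥ 2 and let n, p, m_1, …, m_s be integers with m_1 ≥ m_2 ≥ … ≥ m_s ≥ 0, m_1 + m_2 < n, n ≥ 2m_1 + 1, Σ_{i=1}^s C(m_i+2,2) ≥ C(n+2,2), and 1 ≤ p with 2p ≤ n + 1. Then 2·Σ_{i : m_i ≤ p−1} C(m_i+2,2) + p·Σ_{i : m_i ≥ p} (2m_i + 3 − p) ≥ 2·[C(n+2,2) − C(n+2−2p,2)]. -/

import Mathlib

private lemma two_mul_choose_two (x : ℕ) : 2 * x.choose 2 = x * (x - 1) := by
  induction x with
  | zero => rfl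
  | succ n ih =>
    rw [Nat.choose_succ_succ, Nat.choose_one_right, Nat.mul_add, ih, Nat.add_sub_cancel]
    cases n with
    | zero => rfl
    | succ k =>
      simp only [Nat.succ_sub_one]
      ring

private lemma key_big (x p : ℕ) (h : p ≤ x) :
    2 * (x + 2).choose 2 = p * (2 * x + 3 - p) + (x + 1 - p) * (x + 2 - p) := by
  rw [two_mul_choose_two]
  zify [show p ≤ 2*x+3 by omega, show p ≤ x+1 by omega, show p ≤ x+2 by omega,
    show 1 ≤ x+2 by omega]
  ring


private lemma route2_g1 (n p m1 Q : ℕ) (hn : 2 * m1 + 1 ≤ n) (hpm : p ≤ m1)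
    (hp2 : 2 * p ≤ n + 1)
    (hlt : (n + 2 - 2 * p) * (n + 1 - 2 * p) < Q * (m1 + 2 - p)) :
    2 * n + 1 ≤ Q + 4 * p := by
  by_contra hcon
  push_neg at hcon
  have h1 : Q + 4 * p ≤ 2 * n := by omega
  zify [show 2*p ≤ n+2 by omega, show 2*p ≤ n+1 by omega, show p ≤ m1+2 by omega] at hlt
  have hq : (Q:ℤ) ≤ 2*(n:ℤ) - 4*(p:ℤ) := by
    have : ((Q + 4 * p : ℕ) : ℤ) ≤ ((2 * n : ℕ) : ℤ) := by exact_mod_cast h1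
    push_cast at this; linarith
  have hn' : (2:ℤ) * (m1:ℤ) + 1 ≤ (n:ℤ) := by exact_mod_cast hn
  have hpm' : (p:ℤ) ≤ (m1:ℤ) := by exact_mod_cast hpm
  have hk1 : (Q:ℤ) * ((m1:ℤ) + 2 - p) ≤ (2*(n:ℤ) - 4*p) * ((m1:ℤ) + 2 - p) :=
    mul_le_mul_of_nonneg_right hq (by linarith)
  have hk2 : (0:ℤ) ≤ ((n:ℤ) - 2*m1 - 1 + 2*p - 2*p) * ((n:ℤ) - 2*p) := by
    apply mul_nonneg <;> linarith
  nlinarith [hk1, hk2, hlt]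

private lemma route2_g2 (n p m1 Q : ℕ) (hn : 2 * m1 + 1 ≤ n) (hpm : p ≤ m1)
    (hp2 : 2 * p ≤ n + 1) (hQle : Q ≤ 3 * (m1 + 1 - p))
    (hlt : (n + 2 - 2 * p) * (n + 1 - 2 * p) < Q * (m1 + 2 - p)) :
    False := by
  zify [show 2*p ≤ n+2 by omega, show 2*p ≤ n+1 by omega, show p ≤ m1+2 by omega] at hlt
  have hq : (Q:ℤ) ≤ 3 * ((m1:ℤ) + 1 - p) := by
    have := hQle
    zify [show p ≤ m1+1 by omega] at this
    linarith
  have hn' : (2:ℤ) * (m1:ℤ) + 1 ≤ (n:ℤ) := by exact_mod_cast hn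
  have hpm' : (p:ℤ) ≤ (m1:ℤ) := by exact_mod_cast hpm
  have hk1 : (Q:ℤ) * ((m1:ℤ) + 2 - p) ≤ (3 * ((m1:ℤ) + 1 - p)) * ((m1:ℤ) + 2 - p) :=
    mul_le_mul_of_nonneg_right hq (by linarith)
  have hk2 : (0:ℤ) ≤ ((n:ℤ) - 2*m1 - 1) * ((n:ℤ) + 2*m1 + 2 - 4*p) := by
    apply mul_nonneg <;> linarith
  have hk3 : (0:ℤ) ≤ ((m1:ℤ) + 1 - p) * ((m1:ℤ) - p) := by
    apply mul_nonneg <;> linarith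
  nlinarith [hk1, hk2, hk3, hlt]

/-- Numerical inequality for the even rank case `r = 2p` with `n ≥ 2m_1 + 1`.
(`m` is 1-indexed; `m_i ≤ p - 1` is rendered as `m i < p`.) -/
theorem stmt17 (n s p : ℕ) (m : ℕ → ℕ) (hs : 2 ≤ s)
    (hmono : ∀ i j, 1 ≤ i → i ≤ j → j ≤ s → m j ≤ m i)
    (h12 : m 1 + m 2 < n) (hn : 2 * m 1 + 1 ≤ n)
    (hsum : (n + 2).choose 2 ≤ ∑ i ∈ Finset.Icc 1 s, (m i + 2).choose 2)
    (hp1 : 1 ≤ p) (hp2 : 2 * p ≤ n + 1) :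
    2 * ((n + 2).choose 2 - (n + 2 - 2 * p).choose 2) ≤
      2 * ∑ i ∈ (Finset.Icc 1 s).filter (fun i => m i < p), (m i + 2).choose 2
        + p * ∑ i ∈ (Finset.Icc 1 s).filter (fun i => p ≤ m i), (2 * m i + 3 - p) := by
  classical
  set N := Finset.Icc 1 s with hN
  set Small := N.filter (fun i => m i < p) with hSmall
  set Big := N.filter (fun i => p ≤ m i) with hBigdef
  have hm1 : ∀ i ∈ N, m i ≤ m 1 := by
    intro i hi
    rw [hN, Finset.mem_Icc] at hi
    exact hmono 1 i le_rfl hi.1 hi.2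
  have hBigmem : ∀ i ∈ Big, p ≤ m i := by
    intro i hi; exact (Finset.mem_filter.mp hi).2
  have hBigm1 : ∀ i ∈ Big, m i ≤ m 1 := by
    intro i hi; exact hm1 i (Finset.filter_subset _ _ hi)
  -- split of the full sum
  have hsplit : (∑ i ∈ Small, (m i + 2).choose 2) + (∑ i ∈ Big, (m i + 2).choose 2)
      = ∑ i ∈ N, (m i + 2).choose 2 := by
    have := Finset.sum_filter_add_sum_filter_not N (fun i => m i < p)
      (fun i => (m i + 2).choose 2)
    simpa [hSmall, hBigdef, not_lt] using this
  set SS := ∑ i ∈ Small, (m i + 2).choose 2 with hSS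
  set BC := ∑ i ∈ Big, (m i + 2).choose 2 with hBC
  set SB := ∑ i ∈ Big, (2 * m i + 3 - p) with hSB
  set Q := ∑ i ∈ Big, (m i + 1 - p) with hQdef
  set E := ∑ i ∈ Big, (m i + 1 - p) * (m i + 2 - p) with hE
  -- termwise identity on Big
  have hF2 : 2 * BC = p * SB + E := by
    rw [hBC, hSB, hE, Finset.mul_sum, Finset.mul_sum, ← Finset.sum_add_distrib]
    exact Finset.sum_congr rfl fun i hi => key_big (m i) p (hBigmem i hi)
  -- E ≤ Q * (m 1 + 2 - p)
  have hF3 : E ≤ Q * (m 1 + 2 - p) := by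
    rw [hE, hQdef, Finset.sum_mul]
    refine Finset.sum_le_sum fun i hi => ?_
    exact Nat.mul_le_mul_left _ (Nat.sub_le_sub_right (by have := hBigm1 i hi; omega) p)
  -- hsum doubled
  have hF1 : 2 * (n + 2).choose 2 ≤ 2 * SS + 2 * BC := by
    have : 2 * (n + 2).choose 2 ≤ 2 * ∑ i ∈ N, (m i + 2).choose 2 :=
      Nat.mul_le_mul_left 2 hsum
    omega
  have hY : 2 * (n + 2 - 2 * p).choose 2 = (n + 2 - 2 * p) * (n + 1 - 2 * p) := by
    rw [two_mul_choose_two, show n + 2 - 2*p - 1 = n + 1 - 2*p by omega]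
  rcases le_or_gt (Q * (m 1 + 2 - p)) ((n + 2 - 2 * p) * (n + 1 - 2 * p)) with hcase | hcase
  · -- route 1
    have hEY : E ≤ 2 * (n + 2 - 2 * p).choose 2 := by
      rw [hY]; exact le_trans hF3 hcase
    omega
  · -- route 2
    -- p ≤ m 1
    have hpm1 : p ≤ m 1 := by
      by_contra hcon
      push_neg at hcon
      have hBigempty : Big = ∅ := by
        rw [hBigdef]
        apply Finset.filter_false_of_mem
        intro i hi
        have := hm1 i hi
        omega
      rw [hQdef, hBigempty] at hcase
      simp at hcase
    -- g1 : 2n+1 ≤ Q + 4p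
    have hg1 : 2 * n + 1 ≤ Q + 4 * p :=
      route2_g1 n p (m 1) Q hn hpm1 hp2 hcase
    -- g2 : 4 ≤ Big.card
    have hg2 : 4 ≤ Big.card := by
      by_contra hcon
      push_neg at hcon
      have hQle : Q ≤ 3 * (m 1 + 1 - p) := by
        have h1 : Q ≤ Big.card * (m 1 + 1 - p) := by
          rw [hQdef]
          calc ∑ i ∈ Big, (m i + 1 - p) ≤ ∑ i ∈ Big, (m 1 + 1 - p) :=
                Finset.sum_le_sum fun i hi =>
                  Nat.sub_le_sub_right (by have := hBigm1 i hi; omega) p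
            _ = Big.card * (m 1 + 1 - p) := by
                rw [Finset.sum_const, smul_eq_mul]
        have h2 : Big.card * (m 1 + 1 - p) ≤ 3 * (m 1 + 1 - p) :=
          Nat.mul_le_mul_right _ (by omega)
        omega
      exact route2_g2 n p (m 1) Q hn hpm1 hp2 hQle hcase
    -- SB = 2*Q + card*(p+1)
    have hSBeq : SB = 2 * Q + Big.card * (p + 1) := by
      rw [hSB, hQdef]
      have : ∀ i ∈ Big, 2 * m i + 3 - p = 2 * (m i + 1 - p) + (p + 1) := by
        intro i hi
        have := hBigmem i hi
        omega
      rw [Finset.sum_congr rfl this, Finset.sum_add_distrib, Finset.sum_const,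
        smul_eq_mul, Finset.mul_sum]
    -- SB ≥ 2*(2n+3-2p)
    have hSBge : 2 * (2 * n + 3 - 2 * p) ≤ SB := by
      have h4 : 4 * (p + 1) ≤ Big.card * (p + 1) := Nat.mul_le_mul_right _ hg2
      omega
    have hfin : p * (2 * (2 * n + 3 - 2 * p)) ≤ p * SB := Nat.mul_le_mul_left p hSBge
    -- identity : 2*C(n+2,2) = 2*C(n+2-2p,2) + p*(2*(2n+3-2p))
    have hid : 2 * (n + 2).choose 2
        = 2 * (n + 2 - 2 * p).choose 2 + p * (2 * (2 * n + 3 - 2 * p)) := by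
      rw [two_mul_choose_two, two_mul_choose_two,
        show n + 2 - 1 = n + 1 by omega, show n + 2 - 2*p - 1 = n + 1 - 2*p by omega]
      zify [show 2*p ≤ n+2 by omega, show 2*p ≤ n+1 by omega, show 2*p ≤ 2*n+3 by omega]
      ring
    -- conclude
    have hgoal : 2 * ((n + 2).choose 2 - (n + 2 - 2 * p).choose 2) ≤ p * SB := by
      omega
    omega
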